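/- Let Γ be a core valued constraint language on a finite set D = {d₁,…,d_n}. Then IdPol⁺(Γ) = Pol⁺(Γ_c): an idempotent operation belongs to the positive clone of Γ if and only if it belongs to the positive clone of the language Γ_c obtained from Γ by adding all the unary cost functions N_i. -/

import Mathlib

/-! Basic framework for Valued Constraint Satisfaction Problems (VCSP):
operations, clones, weightings, weighted clones, cost functions,
(weighted/fractional) polymorphisms, expressibility and weighted relational clones. -/

/-- A `k`-ary operation on `D`. -/
abbrev Op (D : Type) (k : ℕ) : Type := (Fin k → D) → D

/-- The `i`-th `k`-ary projection on `D`. -/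
def proj (D : Type) {k : ℕ} (i : Fin k) : Op D k := fun x => x i

/-- An operation is a projection. -/
def IsProj {D : Type} {k : ℕ} (f : Op D k) : Prop := ∃ i : Fin k, f = proj D i

/-- Superposition `f[g₁,…,g_k]` of a `k`-ary operation with `k` many `l`-ary operations. -/
def superposeOp {D : Type} {k l : ℕ} (f : Op D k) (g : Fin k → Op D l) : Op D l :=
  fun x => f fun i => g i x

/-- A clone of operations on `D`: contains all projections and is closed under superposition. -/
structure IsClone {D : Type} (C : ∀ k, Set (Op D k)) : Prop where
  proj_mem : ∀ (k : ℕ) (i : Fin k), proj D i ∈ C k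
  superpose_mem : ∀ (k l : ℕ) (f : Op D k) (g : Fin k → Op D l),
    f ∈ C k → (∀ i, g i ∈ C l) → superposeOp f g ∈ C l

/-- A `k`-ary weighting of the clone `C`: a rational-valued function on `k`-ary operations,
vanishing outside `C`, summing to `0`, and negative only on projections. -/
structure IsWeighting {D : Type} [Fintype D] [DecidableEq D] (C : ∀ k, Set (Op D k))
    {k : ℕ} (ω : Op D k → ℚ) : Prop where
  support_mem : ∀ f : Op D k, ω f ≠ 0 → f ∈ C k
  sum_zero : ∑ f : Op D k, ω f = 0
  neg_imp_proj : ∀ f : Op D k, ω f < 0 → IsProj f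

/-- Superposition of a `k`-ary weighting with `k` many `l`-ary operations. -/
def wSuperpose {D : Type} [Fintype D] [DecidableEq D] {k l : ℕ}
    (ω : Op D k → ℚ) (g : Fin k → Op D l) : Op D l → ℚ :=
  fun f' => ∑ f ∈ Finset.univ.filter (fun f : Op D k => superposeOp f g = f'), ω f

/-- A weighted clone over the clone `C`: a nonempty family of weightings of `C` closed under
non-negative scaling, addition of weightings of equal arity and proper superposition. -/
structure IsWeightedClone {D : Type} [Fintype D] [DecidableEq D]
    (C : ∀ k, Set (Op D k)) (W : ∀ k, Set (Op D k → ℚ)) : Prop where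
  clone : IsClone C
  weighting : ∀ (k : ℕ), ∀ ω ∈ W k, IsWeighting C ω
  nonempty : ∃ k, (W k).Nonempty
  scale_mem : ∀ (k : ℕ) (c : ℚ), 0 ≤ c → ∀ ω ∈ W k, (fun f => c * ω f) ∈ W k
  add_mem : ∀ (k : ℕ), ∀ ω₁ ∈ W k, ∀ ω₂ ∈ W k, (fun f => ω₁ f + ω₂ f) ∈ W k
  superpose_mem : ∀ (k l : ℕ), ∀ ω ∈ W k, ∀ g : Fin k → Op D l,
    (∀ i, g i ∈ C l) → IsWeighting C (wSuperpose ω g) → wSuperpose ω g ∈ W l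

/-- The positive clone of a family of weightings: all projections together with all operations
receiving positive weight from some weighting in the family. -/
def posClone {D : Type} [Fintype D] [DecidableEq D] (W : ∀ k, Set (Op D k → ℚ)) :
    ∀ k, Set (Op D k) :=
  fun k => {f | IsProj f ∨ ∃ ω ∈ W k, 0 < ω f}

/-- An `r`-ary cost function on `D`, with values in `ℚ ∪ {∞}`. -/
abbrev CostF (D : Type) (r : ℕ) : Type := (Fin r → D) → WithTop ℚ

/-- The feasibility relation of a cost function. -/
def Feas {D : Type} {r : ℕ} (ϱ : CostF D r) : Set (Fin r → D) := {x | ϱ x ≠ ⊤}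

/-- Coordinate-wise application of a `k`-ary operation to `k` many `r`-tuples. -/
def appRows {D : Type} {k r : ℕ} (f : Op D k) (xs : Fin k → Fin r → D) : Fin r → D :=
  fun j => f fun i => xs i j

/-- `f` is a polymorphism of `ϱ`: `Feas ϱ` is closed under coordinate-wise application of `f`. -/
def IsPolymorphism {D : Type} {k r : ℕ} (f : Op D k) (ϱ : CostF D r) : Prop :=
  ∀ xs : Fin k → Fin r → D, (∀ i, xs i ∈ Feas ϱ) → appRows f xs ∈ Feas ϱ

/-- A valued constraint language on `D`: a set of cost functions of various arities. -/
abbrev VLang (D : Type) : Type := Set (Σ r : ℕ, CostF D r)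

/-- The clone of polymorphisms of a language. -/
def Pol {D : Type} (Γ : VLang D) : ∀ k, Set (Op D k) :=
  fun _ => {f | ∀ ϱ ∈ Γ, IsPolymorphism f ϱ.2}

/-- Multiplication of an element of `ℚ ∪ {∞}` by a rational scalar (`c·∞ = ∞`). -/
def qmul (c : ℚ) (x : WithTop ℚ) : WithTop ℚ := WithTop.map (fun q => c * q) x

/-- The sum `∑_f ω(f)·ϱ(f(x₁,…,x_k))`, over operations with non-zero weight. -/
def wSum {D : Type} [Fintype D] [DecidableEq D] {k r : ℕ}
    (ω : Op D k → ℚ) (ϱ : CostF D r) (xs : Fin k → Fin r → D) : WithTop ℚ :=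
  ∑ f ∈ Finset.univ.filter (fun f : Op D k => ω f ≠ 0), qmul (ω f) (ϱ (appRows f xs))

/-- `ω` is a weighted polymorphism of the language `Γ`. -/
def IsWeightedPolymorphism {D : Type} [Fintype D] [DecidableEq D] (Γ : VLang D)
    {k : ℕ} (ω : Op D k → ℚ) : Prop :=
  IsWeighting (Pol Γ) ω ∧
    ∀ ϱ ∈ Γ, ∀ xs : Fin k → Fin ϱ.1 → D, (∀ i, xs i ∈ Feas ϱ.2) → wSum ω ϱ.2 xs ≤ 0

/-- The weighted polymorphisms of a language. -/
def wPol {D : Type} [Fintype D] [DecidableEq D] (Γ : VLang D) :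
    ∀ k, Set (Op D k → ℚ) :=
  fun _ => {ω | IsWeightedPolymorphism Γ ω}

/-- The positive clone `Pol⁺(Γ)` of a language. -/
def PolPlus {D : Type} [Fintype D] [DecidableEq D] (Γ : VLang D) : ∀ k, Set (Op D k) :=
  posClone (wPol Γ)

/-- The map `D → D` induced by a unary operation. -/
def unaryFun {D : Type} (f : Op D 1) : D → D := fun x => f fun _ => x

/-- A language is a core if every unary operation in its positive clone is bijective. -/
def IsCore {D : Type} [Fintype D] [DecidableEq D] (Γ : VLang D) : Prop :=
  ∀ f ∈ PolPlus Γ 1, Function.Bijective (unaryFun f)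

/-- An idempotent operation. -/
def Idem {D : Type} {k : ℕ} (f : Op D k) : Prop := ∀ x : D, (f fun _ => x) = x

/-- A cyclic operation: `f(x₁,…,x_k) = f(x₂,…,x_k,x₁)`. -/
def CyclicOp {D : Type} {k : ℕ} (f : Op D k) : Prop :=
  ∀ x : Fin k → D, f x = f (x ∘ ⇑(finRotate k))

/-- A conservative operation. -/
def Conservative {D : Type} {k : ℕ} (f : Op D k) : Prop :=
  ∀ x : Fin k → D, ∃ i, f x = x i

/-- A Taylor operation. -/
def IsTaylor {D : Type} {k : ℕ} (t : Op D k) : Prop :=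
  Idem t ∧ ∀ j : Fin k, ∃ a b : Fin k → Fin 2, a j = 0 ∧ b j = 1 ∧
    ∀ u : Fin 2 → D, (t fun i => u (a i)) = t fun i => u (b i)

/-- An instance of `VCSP(Γ)` with variable set `V`: a finite multiset of constraints,
each a tuple of variables together with a cost function from `Γ`. -/
structure VInstance (D : Type) (Γ : VLang D) (V : Type) where
  cons : Multiset (Σ r : ℕ, (Fin r → V) × CostF D r)
  mem_lang : ∀ c ∈ cons, (⟨c.1, c.2.2⟩ : Σ r : ℕ, CostF D r) ∈ Γ

/-- The cost of an assignment for a VCSP instance. -/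
def VInstance.cost {D V : Type} {Γ : VLang D} (I : VInstance D Γ V) (s : V → D) :
    WithTop ℚ :=
  (I.cons.map fun c => c.2.2 fun i => s (c.2.1 i)).sum

/-- A cost function is expressible over a language `Δ`. -/
def Expressible {D : Type} [Fintype D] [DecidableEq D] (Δ : VLang D) {r : ℕ}
    (ϱ : CostF D r) : Prop :=
  ∃ (n : ℕ) (I : VInstance D Δ (Fin n)) (v : Fin r → Fin n),
    ∀ x : Fin r → D,
      ϱ x = (Finset.univ.filter fun s : Fin n → D => ∀ i, s (v i) = x i).inf fun s => I.cost s

/-- A language is closed under expressibility, non-negative scaling and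
addition of rational constants. -/
def IsWClosed {D : Type} [Fintype D] [DecidableEq D] (Δ : VLang D) : Prop :=
  (∀ (r : ℕ) (ϱ : CostF D r), Expressible Δ ϱ → (⟨r, ϱ⟩ : Σ r : ℕ, CostF D r) ∈ Δ) ∧
  (∀ (r : ℕ) (ϱ : CostF D r) (c : ℚ), 0 ≤ c → (⟨r, ϱ⟩ : Σ r : ℕ, CostF D r) ∈ Δ →
    (⟨r, fun x => qmul c (ϱ x)⟩ : Σ r : ℕ, CostF D r) ∈ Δ) ∧
  (∀ (r : ℕ) (ϱ : CostF D r) (c : ℚ), (⟨r, ϱ⟩ : Σ r : ℕ, CostF D r) ∈ Δ →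
    (⟨r, fun x => ϱ x + (c : WithTop ℚ)⟩ : Σ r : ℕ, CostF D r) ∈ Δ)

/-- The weighted relational clone generated by `Γ`: the smallest language containing `Γ`
closed under expressibility, non-negative scaling and addition of rational constants. -/
def wRelClo {D : Type} [Fintype D] [DecidableEq D] (Γ : VLang D) : VLang D :=
  ⋂₀ {Δ : VLang D | Γ ⊆ Δ ∧ IsWClosed Δ}

/-- The weighting `(1/k)(∑_i 1_{f_i} − ∑_i 1_{π_i})` associated with a `k`-tuple of
`k`-ary operations (a multimorphism), weights added with multiplicity. -/
def multimorphismW {D : Type} [Fintype D] [DecidableEq D] {k : ℕ} (F : Fin k → Op D k) :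
    Op D k → ℚ :=
  fun g => (1 / (k : ℚ)) *
    (((Finset.univ.filter fun i : Fin k => F i = g).card : ℚ) -
     ((Finset.univ.filter fun i : Fin k => proj D i = g).card : ℚ))

/-- `Γ` admits the multimorphism `⟨F 0, …, F (k-1)⟩`. -/
def AdmitsMultimorphism {D : Type} [Fintype D] [DecidableEq D] {k : ℕ}
    (Γ : VLang D) (F : Fin k → Op D k) : Prop :=
  multimorphismW F ∈ wPol Γ k

/-- An `m`-ary fractional operation: a probability distribution on `m`-ary operations. -/
def IsFracOp {D : Type} [Fintype D] [DecidableEq D] {m : ℕ} (ω : Op D m → ℝ) : Prop :=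
  (∀ f, 0 ≤ ω f) ∧ ∑ f : Op D m, ω f = 1

/-- Multiplication of an element of `ℚ ∪ {∞}` by a real scalar, landing in `ℝ ∪ {∞}`. -/
def rmul (c : ℝ) (x : WithTop ℚ) : WithTop ℝ := WithTop.map (fun q : ℚ => c * (q : ℝ)) x

/-- `ω` is a fractional polymorphism of the language `Γ`. -/
def IsFracPolymorphism {D : Type} [Fintype D] [DecidableEq D] (Γ : VLang D) {m : ℕ}
    (ω : Op D m → ℝ) : Prop :=
  IsFracOp ω ∧ ∀ ϱ ∈ Γ, ∀ xs : Fin m → Fin ϱ.1 → D, (∀ i, xs i ∈ Feas ϱ.2) →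
    (∑ g ∈ Finset.univ.filter fun g : Op D m => 0 < ω g, rmul (ω g) (ϱ.2 (appRows g xs)))
      ≤ rmul (1 / (m : ℝ)) (∑ i : Fin m, ϱ.2 (xs i))

/-- The positive clone `fPol⁺(Γ)` defined via fractional polymorphisms. -/
def fPolPlus {D : Type} [Fintype D] [DecidableEq D] (Γ : VLang D) : ∀ k, Set (Op D k) :=
  fun k => {f | IsProj f ∨ ∃ ω : Op D k → ℝ, IsFracPolymorphism Γ ω ∧ 0 < ω f}

/-- Application of a binary operation to two elements. -/
def ap2 {D : Type} (f : Op D 2) (a b : D) : D := f ![a, b]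

/-- Application of a ternary operation to three elements. -/
def ap3 {D : Type} (f : Op D 3) (a b c : D) : D := f ![a, b, c]

/-- A ternary operation restricts to a majority operation on a subset `S`. -/
def IsMajorityOn {D : Type} (f : Op D 3) (S : Set D) : Prop :=
  ∀ x ∈ S, ∀ y ∈ S, ap3 f x x y = x ∧ ap3 f x y x = x ∧ ap3 f y x x = x

/-- A ternary operation restricts to a minority operation on a subset `S`. -/
def IsMinorityOn {D : Type} (f : Op D 3) (S : Set D) : Prop :=
  ∀ x ∈ S, ∀ y ∈ S, ap3 f x x y = y ∧ ap3 f x y x = y ∧ ap3 f y x x = y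

/-- The language `Γ_c`: `Γ` together with all unary cost functions `N_a`
(`N_a(a) = 0`, `N_a(x) = ∞` for `x ≠ a`). -/
def withConstants {D : Type} [DecidableEq D] (Γ : VLang D) : VLang D :=
  Γ ∪ {p : Σ r : ℕ, CostF D r |
        ∃ a : D, p = ⟨1, fun x => if x 0 = a then (0 : WithTop ℚ) else ⊤⟩}

/-- A language is conservative if it contains every `{0,1}`-valued unary cost function. -/
def ConservativeLang {D : Type} (Γ : VLang D) : Prop :=
  ∀ ϱ : CostF D 1, (∀ x, ϱ x = 0 ∨ ϱ x = 1) → (⟨1, ϱ⟩ : Σ r : ℕ, CostF D r) ∈ Γ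

/-- The coordinate-wise action of a `k`-ary operation on `A` on the power `A^n`. -/
def opPow {A : Type} (n : ℕ) {k : ℕ} (f : Op A k) : Op (Fin n → A) k :=
  fun xs c => f fun i => xs i c

/-- Regrouping an `(n·r)`-tuple over `A` into an `r`-tuple of elements of `A^n`. -/
def regroup (A : Type) (n r : ℕ) (y : Fin (n * r) → A) : Fin r → Fin n → A :=
  fun j c => y (finProdFinEquiv (c, j))

section AuxVCSP

variable {D : Type} [Fintype D] [DecidableEq D]

lemma idem_proj {k : ℕ} (i : Fin k) : Idem (proj D i) := fun _ => rfl

lemma proj_mem_Pol (Γ : VLang D) (k : ℕ) (i : Fin k) : proj D i ∈ Pol Γ k := by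
  intro ϱ _ xs hxs
  exact hxs i

lemma qmul_coe (c q : ℚ) : qmul c (q : WithTop ℚ) = ((c * q : ℚ) : WithTop ℚ) := rfl

lemma qmul_zero_right (c : ℚ) : qmul c (0 : WithTop ℚ) = 0 := by
  show qmul c ((0 : ℚ) : WithTop ℚ) = 0
  rw [qmul_coe, mul_zero]
  rfl

/-- A unary polymorphism preserves feasibility, in composed form. -/
lemma unary_presFeas {Γ : VLang D} {u : Op D 1} (hu : u ∈ Pol Γ 1)
    {p : Σ r : ℕ, CostF D r} (hp : p ∈ Γ) {x : Fin p.1 → D} (hx : x ∈ Feas p.2) :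
    unaryFun u ∘ x ∈ Feas p.2 :=
  hu p hp (fun _ => x) (fun _ => hx)

/-- The diagonal of an operation, as a unary operation. -/
def diagOp {E : Type} {k : ℕ} (g : Op E k) : Op E 1 := fun x => g (fun _ => x 0)

lemma diag_mem_Pol {Γ : VLang D} {k : ℕ} {g : Op D k} (hg : g ∈ Pol Γ k) :
    diagOp g ∈ Pol Γ 1 := by
  intro p hp xs hxs
  exact hg p hp (fun _ => xs 0) (fun _ => hxs 0)

lemma diag_proj {k : ℕ} (i : Fin k) : diagOp (proj D i) = proj D 0 := rfl

lemma unaryFun_diagOp {k : ℕ} (g : Op D k) :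
    unaryFun (diagOp g) = fun a => g (fun _ => a) := rfl

lemma feas_N_iff (a : D) (x : Fin 1 → D) :
    ((if x 0 = a then (0 : WithTop ℚ) else ⊤) ≠ ⊤) ↔ x 0 = a := by
  split_ifs with h <;> simp [h]

lemma mem_Pol_withConstants_iff {Γ : VLang D} {k : ℕ} {f : Op D k} :
    f ∈ Pol (withConstants Γ) k ↔ f ∈ Pol Γ k ∧ Idem f := by
  constructor
  · intro hf
    refine ⟨fun p hp => hf p (Or.inl hp), fun a => ?_⟩
    have hmem : (⟨1, fun x : Fin 1 → D => if x 0 = a then (0 : WithTop ℚ) else ⊤⟩ :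
        Σ r : ℕ, CostF D r) ∈ withConstants Γ := Or.inr ⟨a, rfl⟩
    have := hf _ hmem (fun _ _ => a) (fun _ => by
      show (if a = a then (0 : WithTop ℚ) else ⊤) ≠ ⊤
      simp)
    have h2 : (if f (fun _ => a) = a then (0 : WithTop ℚ) else ⊤) ≠ ⊤ := this
    exact (feas_N_iff a (appRows f (fun _ _ => a))).mp h2
  · rintro ⟨hf, hid⟩ p hp
    rcases hp with hp | ⟨a, rfl⟩
    · exact hf p hp
    · intro xs hxs
      have hx : ∀ i, xs i 0 = a := fun i => (feas_N_iff a (xs i)).mp (hxs i)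
      show (if appRows f xs 0 = a then (0 : WithTop ℚ) else ⊤) ≠ ⊤
      have : appRows f xs 0 = a := by
        show f (fun i => xs i 0) = a
        have : (fun i => xs i 0) = fun _ : Fin k => a := funext fun i => hx i
        rw [this]
        exact hid a
      simp [this]

lemma Pol_antitone {Γ Δ : VLang D} (h : Γ ⊆ Δ) (k : ℕ) : Pol Δ k ⊆ Pol Γ k :=
  fun _ hf p hp => hf p (h hp)

/-- Conversion of `wSum` to a rational sum when all relevant values are finite. -/
lemma wSum_eq_coe {k r : ℕ} (ω : Op D k → ℚ) (ϱ : CostF D r) (xs : Fin k → Fin r → D)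
    (hfin : ∀ g, ω g ≠ 0 → ϱ (appRows g xs) ≠ ⊤) :
    wSum ω ϱ xs =
      ((∑ g : Op D k, ω g * ((ϱ (appRows g xs)).untopD 0) : ℚ) : WithTop ℚ) := by
  have hq : ∑ g : Op D k, ω g * ((ϱ (appRows g xs)).untopD 0)
      = ∑ g ∈ Finset.univ.filter (fun g : Op D k => ω g ≠ 0),
          ω g * ((ϱ (appRows g xs)).untopD 0) := by
    refine (Finset.sum_filter_of_ne ?_).symm
    intro g _ hne h0
    exact hne (by rw [h0, zero_mul])
  rw [hq, wSum, WithTop.coe_sum]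
  refine Finset.sum_congr rfl ?_
  intro g hg
  have hg' : ω g ≠ 0 := (Finset.mem_filter.mp hg).2
  obtain ⟨q, hq⟩ := WithTop.ne_top_iff_exists.mp (hfin g hg')
  rw [← hq]
  simp [qmul_coe]

lemma wSum_le_zero_iff {k r : ℕ} (ω : Op D k → ℚ) (ϱ : CostF D r) (xs : Fin k → Fin r → D)
    (hfin : ∀ g, ω g ≠ 0 → ϱ (appRows g xs) ≠ ⊤) :
    wSum ω ϱ xs ≤ 0 ↔ (∑ g : Op D k, ω g * ((ϱ (appRows g xs)).untopD 0)) ≤ 0 := by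
  rw [wSum_eq_coe ω ϱ xs hfin]
  exact WithTop.coe_le_zero
/-- The diagonal weighting of a weighted polymorphism is a unary weighted polymorphism. -/
lemma diag_weighting_mem_wPol {Γ : VLang D} {k : ℕ} {ω : Op D k → ℚ}
    (hω : ω ∈ wPol Γ k) :
    (fun h : Op D 1 => ∑ g ∈ Finset.univ.filter (fun g : Op D k => diagOp g = h), ω g)
      ∈ wPol Γ 1 := by
  set ωb := fun h : Op D 1 =>
    ∑ g ∈ Finset.univ.filter (fun g : Op D k => diagOp g = h), ω g with hωb
  have hsupp : ∀ h : Op D 1, ωb h ≠ 0 → h ∈ Pol Γ 1 := by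
    intro h hne
    obtain ⟨g, hg, hgne⟩ := Finset.exists_ne_zero_of_sum_ne_zero hne
    have hdg : diagOp g = h := (Finset.mem_filter.mp hg).2
    exact hdg ▸ diag_mem_Pol (hω.1.support_mem g hgne)
  constructor
  · refine ⟨hsupp, ?_, ?_⟩
    · rw [hωb]
      rw [Finset.sum_fiberwise_of_maps_to (fun g _ => Finset.mem_univ (diagOp g))]
      exact hω.1.sum_zero
    · intro h hneg
      have hlt : ∑ g ∈ Finset.univ.filter (fun g : Op D k => diagOp g = h), ω g
          < ∑ _g ∈ Finset.univ.filter (fun g : Op D k => diagOp g = h), (0:ℚ) := by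
        simpa using hneg
      obtain ⟨g, hg, hglt⟩ := Finset.exists_lt_of_sum_lt hlt
      obtain ⟨i, rfl⟩ := hω.1.neg_imp_proj g hglt
      refine ⟨0, ?_⟩
      rw [← (Finset.mem_filter.mp hg).2, diag_proj]
  · intro p hp xs hxs
    set ys : Fin k → Fin p.1 → D := fun _ => xs 0 with hys
    have hysf : ∀ i, ys i ∈ Feas p.2 := fun _ => hxs 0
    have horig : wSum ω p.2 ys ≤ 0 := hω.2 p hp ys hysf
    have hfinω : ∀ g : Op D k, ω g ≠ 0 → p.2 (appRows g ys) ≠ ⊤ :=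
      fun g hg => hω.1.support_mem g hg p hp ys hysf
    have hfinb : ∀ h : Op D 1, ωb h ≠ 0 → p.2 (appRows h xs) ≠ ⊤ :=
      fun h hh => hsupp h hh p hp xs hxs
    rw [wSum_le_zero_iff _ _ _ hfinb]
    rw [wSum_le_zero_iff _ _ _ hfinω] at horig
    have key : ∑ h : Op D 1, ωb h * ((p.2 (appRows h xs)).untopD 0)
        = ∑ g : Op D k, ω g * ((p.2 (appRows g ys)).untopD 0) := by
      rw [← Finset.sum_fiberwise_of_maps_to
        (fun (g : Op D k) _ => Finset.mem_univ (diagOp g))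
        (fun g : Op D k => ω g * ((p.2 (appRows g ys)).untopD 0))]
      refine Finset.sum_congr rfl fun h _ => ?_
      rw [hωb, Finset.sum_mul]
      refine Finset.sum_congr rfl fun g hg => ?_
      have hdg : diagOp g = h := (Finset.mem_filter.mp hg).2
      have happ : appRows g ys = appRows h xs := by
        rw [← hdg]; rfl
      rw [happ]
    rw [key]; exact horig
lemma appRows_unary {r : ℕ} (u : Op D 1) (z : Fin r → D) :
    appRows u (fun _ => z) = unaryFun u ∘ z := rfl

/-- Core automorphism lemma: a unary operation with positive weight in a weighted
polymorphism of a core language preserves the value of every cost function. -/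
lemma unary_aut {Γ : VLang D} (hcore : IsCore Γ) {μ : Op D 1 → ℚ}
    (hμ : μ ∈ wPol Γ 1) {h : Op D 1} (hh : 0 < μ h)
    {p : Σ r : ℕ, CostF D r} (hp : p ∈ Γ) {x : Fin p.1 → D} (hx : x ∈ Feas p.2) :
    p.2 (unaryFun h ∘ x) = p.2 x := by
  classical
  set P : Finset (Op D 1) := Finset.univ.filter (fun u => 0 < μ u) with hP
  have hmemP : ∀ u, u ∈ P ↔ 0 < μ u := by
    intro u; rw [hP, Finset.mem_filter]; simp
  have hbij : ∀ u ∈ P, Function.Bijective (unaryFun u) := by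
    intro u hu
    exact hcore u (Or.inr ⟨μ, hμ, (hmemP u).mp hu⟩)
  have hPol : ∀ u ∈ P, u ∈ Pol Γ 1 :=
    fun u hu => hμ.1.support_mem u (ne_of_gt ((hmemP u).mp hu))
  set V : (Fin p.1 → D) → ℚ := fun z => (p.2 z).untopD 0 with hV
  set c : ℚ := ∑ u ∈ P, μ u with hc
  -- pointwise inequality
  have hkey : ∀ z, z ∈ Feas p.2 → ∑ u ∈ P, μ u * V (unaryFun u ∘ z) ≤ c * V z := by
    intro z hz
    have horig := hμ.2 p hp (fun _ => z) (fun _ => hz)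
    have hfin : ∀ u : Op D 1, μ u ≠ 0 → p.2 (appRows u (fun _ => z)) ≠ ⊤ :=
      fun u hu => hμ.1.support_mem u hu p hp (fun _ => z) (fun _ => hz)
    rw [wSum_le_zero_iff _ _ _ hfin] at horig
    have hsplit := Finset.sum_filter_add_sum_filter_not Finset.univ
      (fun u : Op D 1 => 0 < μ u)
      (fun u : Op D 1 => μ u * ((p.2 (appRows u (fun _ => z))).untopD 0))
    have hneg : ∑ u ∈ Finset.univ.filter (fun u : Op D 1 => ¬ 0 < μ u),
        μ u * ((p.2 (appRows u (fun _ => z))).untopD 0)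
        = (∑ u ∈ Finset.univ.filter (fun u : Op D 1 => ¬ 0 < μ u), μ u) * V z := by
      rw [Finset.sum_mul]
      refine Finset.sum_congr rfl fun u hu => ?_
      rcases eq_or_ne (μ u) 0 with h0 | h0
      · rw [h0, zero_mul, zero_mul]
      · have hlt : μ u < 0 :=
          lt_of_le_of_ne (not_lt.mp (Finset.mem_filter.mp hu).2) h0
        obtain ⟨i, rfl⟩ := hμ.1.neg_imp_proj u hlt
        have : appRows (proj D i) (fun _ => z) = z := rfl
        rw [this]
    have hnegsum : ∑ u ∈ Finset.univ.filter (fun u : Op D 1 => ¬ 0 < μ u), μ u = -c := by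
      have := Finset.sum_filter_add_sum_filter_not Finset.univ
        (fun u : Op D 1 => 0 < μ u) μ
      rw [hμ.1.sum_zero, ← hP] at this
      rw [hc]
      linarith
    rw [hneg, hnegsum, ← hP] at hsplit
    have heq : ∀ u ∈ P, μ u * ((p.2 (appRows u (fun _ => z))).untopD 0)
        = μ u * V (unaryFun u ∘ z) := by
      intro u _; rw [appRows_unary]
    rw [Finset.sum_congr rfl heq] at hsplit
    have : ∑ u ∈ P, μ u * V (unaryFun u ∘ z) + -c * V z ≤ 0 := hsplit ▸ horig
    linarith
  -- feasibility preservation by P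
  have hfeasP : ∀ u ∈ P, ∀ z, z ∈ Feas p.2 → unaryFun u ∘ z ∈ Feas p.2 :=
    fun u hu z hz => unary_presFeas (hPol u hu) hp hz
  -- the monoid of permutations
  set gens : Set (Equiv.Perm D) := {σ | ∃ u ∈ P, ⇑σ = unaryFun u} with hgens
  set M : Submonoid (Equiv.Perm D) := Submonoid.closure gens with hM
  set Mfin : Finset (Equiv.Perm D) := Finset.univ.filter (· ∈ M) with hMfin
  have hmemMfin : ∀ σ, σ ∈ Mfin ↔ σ ∈ M := by
    intro σ; rw [hMfin, Finset.mem_filter]; simp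
  have hMfeas : ∀ σ ∈ M, ∀ z, z ∈ Feas p.2 → ⇑σ ∘ z ∈ Feas p.2 := by
    intro σ hσ
    induction hσ using Submonoid.closure_induction with
    | mem τ hτ =>
      obtain ⟨u, hu, hτu⟩ := hτ
      intro z hz; rw [hτu]; exact hfeasP u hu z hz
    | one => intro z hz; simpa using hz
    | mul σ₁ σ₂ h₁ h₂ ih₁ ih₂ =>
      intro z hz
      have : ⇑(σ₁ * σ₂) ∘ z = ⇑σ₁ ∘ (⇑σ₂ ∘ z) := rfl
      rw [this]; exact ih₁ _ (ih₂ z hz)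
  set W : Equiv.Perm D → ℚ := fun σ => V (⇑σ ∘ x) with hW
  -- total choice of permutation representatives
  set tfun : Op D 1 → Equiv.Perm D :=
    fun u => if hu : u ∈ P then Equiv.ofBijective _ (hbij u hu) else 1 with htfun
  have htf : ∀ u ∈ P, ⇑(tfun u) = unaryFun u := by
    intro u hu; rw [htfun]; simp only [dif_pos hu]; rfl
  have htgens : ∀ u ∈ P, tfun u ∈ M := by
    intro u hu
    exact Submonoid.subset_closure ⟨u, hu, htf u hu⟩
  have hinvM : ∀ σ : Equiv.Perm D, σ ∈ M → σ⁻¹ ∈ M := by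
    intro σ hσ
    have hpos : 0 < orderOf σ := orderOf_pos σ
    have hinv : σ⁻¹ = σ ^ (orderOf σ - 1) := by
      apply inv_eq_of_mul_eq_one_right
      rw [← pow_succ', Nat.sub_add_cancel hpos]
      exact pow_orderOf_eq_one σ
    rw [hinv]; exact pow_mem hσ _
  -- brackets
  have hWrw : ∀ u ∈ P, ∀ σ : Equiv.Perm D, V (unaryFun u ∘ (⇑σ ∘ x)) = W (tfun u * σ) := by
    intro u hu σ
    have hcomp : ⇑(tfun u * σ) ∘ x = unaryFun u ∘ (⇑σ ∘ x) := by
      have h1 : ⇑(tfun u * σ) = ⇑(tfun u) ∘ ⇑σ := rfl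
      rw [h1, htf u hu]; rfl
    show V (unaryFun u ∘ (⇑σ ∘ x)) = V (⇑(tfun u * σ) ∘ x)
    rw [hcomp]
  have hB : ∀ σ ∈ M, ∑ u ∈ P, μ u * W (tfun u * σ) ≤ c * W σ := by
    intro σ hσ
    have := hkey (⇑σ ∘ x) (hMfeas σ hσ x hx)
    calc ∑ u ∈ P, μ u * W (tfun u * σ)
        = ∑ u ∈ P, μ u * V (unaryFun u ∘ (⇑σ ∘ x)) :=
          Finset.sum_congr rfl (fun u hu => by rw [hWrw u hu σ])
      _ ≤ c * V (⇑σ ∘ x) := this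
      _ = c * W σ := rfl
  -- total sum is zero
  have hshift : ∀ u ∈ P, ∑ σ ∈ Mfin, W (tfun u * σ) = ∑ σ ∈ Mfin, W σ := by
    intro u hu
    refine Finset.sum_nbij' (fun σ => tfun u * σ) (fun σ => (tfun u)⁻¹ * σ) ?_ ?_ ?_ ?_ ?_
    · intro σ hσ
      exact (hmemMfin _).mpr (mul_mem (htgens u hu) ((hmemMfin σ).mp hσ))
    · intro σ hσ
      exact (hmemMfin _).mpr (mul_mem (hinvM _ (htgens u hu)) ((hmemMfin σ).mp hσ))
    · intro σ _
      show (tfun u)⁻¹ * (tfun u * σ) = σ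
      rw [← mul_assoc, inv_mul_cancel, one_mul]
    · intro σ _
      show tfun u * ((tfun u)⁻¹ * σ) = σ
      rw [← mul_assoc, mul_inv_cancel, one_mul]
    · intro σ _; rfl
  have hBsum : ∑ σ ∈ Mfin, (c * W σ - ∑ u ∈ P, μ u * W (tfun u * σ)) = 0 := by
    rw [Finset.sum_sub_distrib]
    rw [Finset.sum_comm]
    have h1 : ∑ u ∈ P, ∑ σ ∈ Mfin, μ u * W (tfun u * σ)
        = ∑ u ∈ P, μ u * ∑ σ ∈ Mfin, W σ := by
      refine Finset.sum_congr rfl fun u hu => ?_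
      rw [← Finset.mul_sum, hshift u hu]
    rw [h1, ← Finset.sum_mul, ← hc, ← Finset.mul_sum]
    ring
  have hone : (1 : Equiv.Perm D) ∈ Mfin := (hmemMfin 1).mpr (one_mem M)
  have heach : ∀ σ ∈ Mfin, c * W σ - ∑ u ∈ P, μ u * W (tfun u * σ) = 0 := by
    have := (Finset.sum_eq_zero_iff_of_nonneg ?_).mp hBsum
    · exact this
    · intro σ hσ
      have := hB σ ((hmemMfin σ).mp hσ)
      linarith
  -- maximum principle
  obtain ⟨σs, hσs, hσsmax⟩ := Finset.exists_max_image Mfin W ⟨1, hone⟩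
  set m : ℚ := W σs with hm
  have hstep : ∀ σ ∈ M, W σ = m → ∀ u ∈ P, W (tfun u * σ) = m := by
    intro σ hσ hWσ u hu
    have hz := heach σ ((hmemMfin σ).mpr hσ)
    have hsum2 : ∑ w ∈ P, μ w * (m - W (tfun w * σ)) = 0 := by
      have : ∑ w ∈ P, μ w * (m - W (tfun w * σ))
          = (∑ w ∈ P, μ w) * m - ∑ w ∈ P, μ w * W (tfun w * σ) := by
        rw [Finset.sum_mul]
        rw [← Finset.sum_sub_distrib]
        refine Finset.sum_congr rfl fun w _ => by ring
      rw [this, ← hc, hWσ] at *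
      linarith
    have hterm := (Finset.sum_eq_zero_iff_of_nonneg ?_).mp hsum2 u hu
    · have hμu : 0 < μ u := (hmemP u).mp hu
      rcases mul_eq_zero.mp hterm with h0 | h0
      · exact absurd h0 (ne_of_gt hμu)
      · linarith
    · intro w hw
      have hle : W (tfun w * σ) ≤ m :=
        hσsmax _ ((hmemMfin _).mpr (mul_mem (htgens w hw) hσ))
      have : 0 < μ w := (hmemP w).mp hw
      nlinarith
  have hclimb : ∀ ρ ∈ M, ∀ σ ∈ M, W σ = m → W (ρ * σ) = m := by
    intro ρ hρ
    induction hρ using Submonoid.closure_induction with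
    | mem τ hτ =>
      intro σ hσ hWσ
      obtain ⟨u, hu, hτu⟩ := hτ
      have : τ = tfun u := Equiv.coe_fn_injective
        (show ⇑τ = ⇑(tfun u) by rw [hτu, htf u hu])
      rw [this]; exact hstep σ hσ hWσ u hu
    | one => intro σ hσ hWσ; rw [one_mul]; exact hWσ
    | mul ρ₁ ρ₂ h₁ h₂ ih₁ ih₂ =>
      intro σ hσ hWσ
      rw [mul_assoc]
      exact ih₁ _ (mul_mem h₂ hσ) (ih₂ σ hσ hWσ)
  have hW1 : W 1 = m := by
    have hpos : 0 < orderOf σs := orderOf_pos σs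
    have h1 : σs ^ (orderOf σs - 1) * σs = 1 := by
      rw [← pow_succ, Nat.sub_add_cancel hpos]
      exact pow_orderOf_eq_one σs
    have := hclimb (σs ^ (orderOf σs - 1)) (pow_mem ((hmemMfin σs).mp hσs) _)
      σs ((hmemMfin σs).mp hσs) rfl
    rw [h1] at this
    exact this
  have hhP : h ∈ P := (hmemP h).mpr hh
  have hfinal : W (tfun h * 1) = m := hstep 1 (one_mem M) hW1 h hhP
  rw [mul_one] at hfinal
  -- translate back
  have hVeq : V (unaryFun h ∘ x) = V x := by
    have h1 : V (unaryFun h ∘ x) = W (tfun h) := by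
      rw [hW, ← htf h hhP]
    have h2 : V x = W 1 := by
      rw [hW]; congr 1
    rw [h1, h2, hfinal, hW1]
  have hfx : p.2 (unaryFun h ∘ x) ≠ ⊤ :=
    unary_presFeas (hPol h hhP) hp hx
  obtain ⟨q1, hq1⟩ := WithTop.ne_top_iff_exists.mp hfx
  obtain ⟨q2, hq2⟩ := WithTop.ne_top_iff_exists.mp hx
  rw [← hq1, ← hq2]
  have hVeq' : (p.snd (unaryFun h ∘ x)).untopD 0 = (p.snd x).untopD 0 := hVeq
  rw [← hq1, ← hq2] at hVeq'
  simp only [WithTop.untopD_coe] at hVeq'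
  exact_mod_cast hVeq'
lemma max_min_add (a : ℚ) : max a 0 + min a 0 = a := by
  rcases le_total a 0 with h | h
  · rw [max_eq_right h, min_eq_left h, zero_add]
  · rw [max_eq_left h, min_eq_right h, add_zero]

end AuxVCSP

/-- For a core language `Γ`, `IdPol⁺(Γ) = Pol⁺(Γ_c)`: an idempotent operation
lies in the positive clone of `Γ` iff it lies in the positive clone of `Γ_c`, the language
obtained by adding all the unary cost functions `N_a`. -/
theorem idPolPlus_eq_polPlus_withConstants {D : Type} [Fintype D] [DecidableEq D] [Nonempty D]
    (Γ : VLang D) (hcore : IsCore Γ) :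
    ∀ (k : ℕ) (f : Op D k),
      (f ∈ PolPlus Γ k ∧ Idem f) ↔ f ∈ PolPlus (withConstants Γ) k := by
  intro k f
  constructor
  · rintro ⟨hfp, hfid⟩
    rcases hfp with hproj | ⟨ω, hω, hωf⟩
    · exact Or.inl hproj
    · classical
      -- the diagonal maps
      set φ : Op D k → D → D := fun g a => g (fun _ => a) with hφ
      -- the diagonal weighting
      set ωb := fun h : Op D 1 =>
        ∑ g ∈ Finset.univ.filter (fun g : Op D k => diagOp g = h), ω g with hωb
      have hωbP : ωb ∈ wPol Γ 1 := diag_weighting_mem_wPol hω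
      have hdiagpos : ∀ g : Op D k, 0 < ω g → diagOp g ≠ proj D 0 →
          0 < ωb (diagOp g) := by
        intro g hg hne
        apply Finset.sum_pos'
        · intro g' hg'
          rcases lt_trichotomy (ω g') 0 with hlt | heq | hgt
          · obtain ⟨i, rfl⟩ := hω.1.neg_imp_proj g' hlt
            have h1 := (Finset.mem_filter.mp hg').2
            rw [diag_proj] at h1
            exact absurd h1.symm hne
          · exact le_of_eq heq.symm
          · exact le_of_lt hgt
        · exact ⟨g, Finset.mem_filter.mpr ⟨Finset.mem_univ g, rfl⟩, hg⟩
      have hbijφ : ∀ g : Op D k, 0 < ω g → Function.Bijective (φ g) := by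
        intro g hg
        by_cases hne : diagOp g = proj D 0
        · have : φ g = id := by
            funext a
            show g (fun _ => a) = a
            have := congrFun hne (fun _ => a)
            exact this
          rw [this]; exact Function.bijective_id
        · exact hcore (diagOp g) (Or.inr ⟨ωb, hωbP, hdiagpos g hg hne⟩)
      have hautφ : ∀ g : Op D k, 0 < ω g → ∀ p ∈ Γ, ∀ z, z ∈ Feas p.2 →
          p.2 (φ g ∘ z) = p.2 z := by
        intro g hg p hp z hz
        by_cases hne : diagOp g = proj D 0
        · have hid : φ g = id := by
            funext a; exact congrFun hne (fun _ => a)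
          rw [hid]
          rfl
        · exact unary_aut hcore hωbP (hdiagpos g hg hne) hp hz
      have hiter : ∀ g : Op D k, 0 < ω g → ∀ n : ℕ, ∀ p ∈ Γ, ∀ z, z ∈ Feas p.2 →
          p.2 ((φ g)^[n] ∘ z) = p.2 z := by
        intro g hg n
        induction n with
        | zero => intro p hp z hz; rfl
        | succ n ih =>
          intro p hp z hz
          have hfz : φ g ∘ z ∈ Feas p.2 := by
            show p.2 (φ g ∘ z) ≠ ⊤
            rw [hautφ g hg p hp z hz]
            exact hz
          have hre : (φ g)^[n + 1] ∘ z = (φ g)^[n] ∘ (φ g ∘ z) := by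
            rw [Function.iterate_succ]
            rfl
          rw [hre, ih p hp _ hfz, hautφ g hg p hp z hz]
      -- the exponent choice
      have hm : ∀ g : Op D k, ∃ m : ℕ, 0 < ω g → (φ g)^[m + 1] = id := by
        intro g
        by_cases hg : 0 < ω g
        · set π : Equiv.Perm D := Equiv.ofBijective (φ g) (hbijφ g hg) with hπ
          refine ⟨orderOf π - 1, fun _ => ?_⟩
          have hpos : 0 < orderOf π := orderOf_pos π
          rw [Nat.sub_add_cancel hpos]
          have h1 : ⇑(π ^ orderOf π) = (φ g)^[orderOf π] := by
            rw [Equiv.Perm.coe_pow]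
            rfl
          rw [← h1, pow_orderOf_eq_one]
          rfl
        · exact ⟨0, fun h => absurd h hg⟩
      choose mfun hmfun using hm
      set t : Op D k → Op D k := fun g x => (φ g)^[mfun g] (g x) with ht
      have hidem_t : ∀ g : Op D k, 0 < ω g → Idem (t g) := by
        intro g hg a
        show (φ g)^[mfun g] (g (fun _ => a)) = a
        have h1 : g (fun _ => a) = φ g a := rfl
        rw [h1, ← Function.iterate_succ_apply (φ g) (mfun g) a, hmfun g hg]
        rfl
      have htf : t f = f := by
        have hφf : φ f = id := funext fun a => hfid a
        funext x
        show (φ f)^[mfun f] (f x) = f x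
        rw [hφf, Function.iterate_id]
        rfl
      have happt : ∀ (g : Op D k) (r : ℕ) (xs : Fin k → Fin r → D),
          appRows (t g) xs = (φ g)^[mfun g] ∘ appRows g xs := fun g r xs => rfl
      have hPol_t : ∀ g : Op D k, 0 < ω g → t g ∈ Pol Γ k := by
        intro g hg p hp xs hxs
        show p.2 (appRows (t g) xs) ≠ ⊤
        rw [happt g p.1 xs, hiter g hg (mfun g) p hp _
          (hω.1.support_mem g (ne_of_gt hg) p hp xs hxs)]
        exact hω.1.support_mem g (ne_of_gt hg) p hp xs hxs
      -- the new weighting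
      set ω' : Op D k → ℚ := fun g' =>
        (∑ g ∈ Finset.univ.filter (fun g : Op D k => t g = g'), max (ω g) 0)
          + min (ω g') 0 with hω'
      have hfib_nonneg : ∀ g' : Op D k,
          0 ≤ ∑ g ∈ Finset.univ.filter (fun g : Op D k => t g = g'), max (ω g) 0 :=
        fun g' => Finset.sum_nonneg fun g _ => le_max_right _ _
      have hW' : IsWeighting (Pol (withConstants Γ)) ω' := by
        constructor
        · intro g' hg'
          by_cases hA : (∑ g ∈ Finset.univ.filter (fun g : Op D k => t g = g'),
              max (ω g) 0) = 0
          · have hmin : min (ω g') 0 ≠ 0 := by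
              intro h0
              apply hg'
              rw [hω']
              simp only [hA, h0, add_zero]
            have hneg : ω g' < 0 := by
              rcases le_total (ω g') 0 with h | h
              · rcases lt_or_eq_of_le h with h' | h'
                · exact h'
                · exact absurd (by rw [min_eq_left h, h']) hmin
              · exact absurd (min_eq_right h) hmin
            obtain ⟨i, rfl⟩ := hω.1.neg_imp_proj g' hneg
            exact mem_Pol_withConstants_iff.mpr ⟨proj_mem_Pol Γ k i, idem_proj i⟩
          · obtain ⟨g, hg, hgne⟩ := Finset.exists_ne_zero_of_sum_ne_zero hA
            have hgpos : 0 < ω g := by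
              rcases lt_or_ge 0 (ω g) with h | h
              · exact h
              · exact absurd (max_eq_right h) hgne
            have hgt : t g = g' := (Finset.mem_filter.mp hg).2
            rw [← hgt]
            exact mem_Pol_withConstants_iff.mpr ⟨hPol_t g hgpos, hidem_t g hgpos⟩
        · rw [hω']
          rw [Finset.sum_add_distrib]
          rw [Finset.sum_fiberwise_of_maps_to (fun g _ => Finset.mem_univ (t g))]
          rw [← Finset.sum_add_distrib]
          have : ∀ g : Op D k, max (ω g) 0 + min (ω g) 0 = ω g := fun g => max_min_add _
          rw [Finset.sum_congr rfl (fun g _ => this g)]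
          exact hω.1.sum_zero
        · intro g' hneg'
          have : min (ω g') 0 < 0 := by
            by_contra hge
            push_neg at hge
            have := hfib_nonneg g'
            rw [hω'] at hneg'
            simp only at hneg'
            linarith
          have hneg : ω g' < 0 := by
            rcases le_total (ω g') 0 with h | h
            · rcases lt_or_eq_of_le h with h' | h'
              · exact h'
              · rw [min_eq_left h, h'] at this; exact absurd this (lt_irrefl 0)
            · rw [min_eq_right h] at this; exact absurd this (lt_irrefl 0)
          exact hω.1.neg_imp_proj g' hneg
      have hω'wpol : ω' ∈ wPol (withConstants Γ) k := by
        refine ⟨hW', ?_⟩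
        intro p hp' xs hxs
        rcases hp' with hp | ⟨a, rfl⟩
        · -- original cost functions
          have hfeasω : ∀ g : Op D k, ω g ≠ 0 → p.2 (appRows g xs) ≠ ⊤ :=
            fun g hg => hω.1.support_mem g hg p hp xs hxs
          have hsupp' : ∀ g', ω' g' ≠ 0 → g' ∈ Pol Γ k :=
            fun g' hg' => Pol_antitone Set.subset_union_left k (hW'.support_mem g' hg')
          have hfeasω' : ∀ g' : Op D k, ω' g' ≠ 0 → p.2 (appRows g' xs) ≠ ⊤ :=
            fun g' hg' => hsupp' g' hg' p hp xs hxs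
          rw [wSum_le_zero_iff _ _ _ hfeasω']
          have horig := hω.2 p hp xs hxs
          rw [wSum_le_zero_iff _ _ _ hfeasω] at horig
          set V := fun z : Fin p.1 → D => (p.2 z).untopD 0 with hV
          have hiterV : ∀ g : Op D k, 0 < ω g →
              V (appRows (t g) xs) = V (appRows g xs) := by
            intro g hg
            rw [hV]
            show ((p.2 (appRows (t g) xs)).untopD 0) = ((p.2 (appRows g xs)).untopD 0)
            rw [happt g p.1 xs, hiter g hg (mfun g) p hp _
              (hω.1.support_mem g (ne_of_gt hg) p hp xs hxs)]
          calc ∑ g' : Op D k, ω' g' * V (appRows g' xs)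
              = (∑ g' : Op D k,
                  (∑ g ∈ Finset.univ.filter (fun g : Op D k => t g = g'), max (ω g) 0)
                    * V (appRows g' xs))
                + ∑ g' : Op D k, min (ω g') 0 * V (appRows g' xs) := by
                rw [← Finset.sum_add_distrib]
                refine Finset.sum_congr rfl fun g' _ => ?_
                rw [hω']
                ring
            _ = (∑ g : Op D k, max (ω g) 0 * V (appRows g xs))
                + ∑ g' : Op D k, min (ω g') 0 * V (appRows g' xs) := by
                congr 1
                rw [← Finset.sum_fiberwise_of_maps_to
                  (fun (g : Op D k) _ => Finset.mem_univ (t g))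
                  (fun g : Op D k => max (ω g) 0 * V (appRows g xs))]
                refine Finset.sum_congr rfl fun g' _ => ?_
                rw [Finset.sum_mul]
                refine Finset.sum_congr rfl fun g hg => ?_
                have hgt : t g = g' := (Finset.mem_filter.mp hg).2
                rcases lt_or_ge 0 (ω g) with hpos | hle
                · rw [← hgt, hiterV g hpos]
                · rw [max_eq_right hle, zero_mul, zero_mul]
            _ = ∑ g : Op D k, ω g * V (appRows g xs) := by
                rw [← Finset.sum_add_distrib]
                refine Finset.sum_congr rfl fun g _ => ?_
                rw [← max_min_add (ω g)]
                ring_nf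
                rw [max_min_add (ω g)]
                ring
            _ ≤ 0 := horig
        · -- the added unary cost functions
          have hval : wSum ω' (fun x : Fin 1 → D =>
              if x 0 = a then (0 : WithTop ℚ) else ⊤) xs = 0 := by
            apply Finset.sum_eq_zero
            intro g' hg'
            have hg'ne : ω' g' ≠ 0 := (Finset.mem_filter.mp hg').2
            have hfeas := hW'.support_mem g' hg'ne
              ⟨1, fun x : Fin 1 → D => if x 0 = a then (0 : WithTop ℚ) else ⊤⟩
              (Or.inr ⟨a, rfl⟩) xs hxs
            have h0 : (if appRows g' xs 0 = a then (0 : WithTop ℚ) else ⊤) = 0 := by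
              by_cases hcond : appRows g' xs 0 = a
              · rw [if_pos hcond]
              · exact absurd (if_neg hcond) hfeas
            show qmul (ω' g') (if appRows g' xs 0 = a then (0 : WithTop ℚ) else ⊤) = 0
            rw [h0]
            exact qmul_zero_right _
          exact le_of_eq hval
      -- positivity at f
      have hω'f : 0 < ω' f := by
        show 0 < (∑ g ∈ Finset.univ.filter (fun g : Op D k => t g = f), max (ω g) 0)
          + min (ω f) 0
        have hminf : min (ω f) 0 = 0 := min_eq_right (le_of_lt hωf)
        rw [hminf, add_zero]
        have hfmem : f ∈ Finset.univ.filter (fun g : Op D k => t g = f) :=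
          Finset.mem_filter.mpr ⟨Finset.mem_univ f, htf⟩
        calc (0 : ℚ) < max (ω f) 0 := by rw [max_eq_left (le_of_lt hωf)]; exact hωf
          _ ≤ ∑ g ∈ Finset.univ.filter (fun g : Op D k => t g = f), max (ω g) 0 :=
            Finset.single_le_sum (f := fun g : Op D k => max (ω g) 0)
              (fun g _ => le_max_right _ _) hfmem
      exact Or.inr ⟨ω', hω'wpol, hω'f⟩
  · intro hf
    rcases hf with hproj | ⟨ω, hω, hωf⟩
    · obtain ⟨i, rfl⟩ := hproj
      exact ⟨Or.inl ⟨i, rfl⟩, idem_proj i⟩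
    · constructor
      · refine Or.inr ⟨ω, ⟨⟨fun g hg =>
          Pol_antitone Set.subset_union_left k (hω.1.support_mem g hg),
          hω.1.sum_zero, hω.1.neg_imp_proj⟩, ?_⟩, hωf⟩
        intro p hp xs hxs
        exact hω.2 p (Or.inl hp) xs hxs
      · have hfPol : f ∈ Pol (withConstants Γ) k :=
          hω.1.support_mem f (ne_of_gt hωf)
        exact (mem_Pol_withConstants_iff.mp hfPol).2
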